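/- For any matrices X, D_y ∈ ℝ^{m×n} where D_y = Diag(σ) is diagonal with nonincreasing nonnegative entries, the Frobenius inner product satisfies ⟨X, D_y⟩ ≤ ⟨D_x, D_y⟩, where D_x = Diag(σ_x) is the diagonal matrix of singular values of X (in decreasing order). -/

import Mathlib

open Matrix

/-- Rectangular diagonal matrix built from a vector of length `m` (with `m ≤ n`). -/
def diagMN (m n : ℕ) (σ : Fin m → ℝ) : Matrix (Fin m) (Fin n) ℝ :=
  Matrix.of fun (i : Fin m) (j : Fin n) => if (i : ℕ) = (j : ℕ) then σ i else 0

/- telescoping helper -/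
lemma tele_aux (τ : ℕ → ℝ) : ∀ m i, i < m →
    ∑ p ∈ Finset.range m, (if i ≤ p then τ p - τ (p+1) else 0) = τ i - τ m := by
  intro m
  induction m with
  | zero => intro i hi; omega
  | succ m ih =>
    intro i hi
    rw [Finset.sum_range_succ]
    rcases Nat.lt_or_ge i m with h | h
    · rw [ih i h, if_pos (le_of_lt h)]; ring
    · have hi' : i = m := by omega
      have h0 : ∑ p ∈ Finset.range m, (if i ≤ p then τ p - τ (p+1) else 0) = 0 := by
        apply Finset.sum_eq_zero
        intro p hp
        rw [if_neg]
        have := Finset.mem_range.mp hp; omega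
      rw [h0, if_pos (by omega), hi']; ring

/- squares rectangle bound -/
lemma sq_rect {ι κ : Type*} (S : Finset ι) (T : Finset κ) (W : ι → κ → ℝ)
    (hrow : ∀ i ∈ S, ∑ k ∈ T, (W i k)^2 ≤ 1)
    (hcol : ∀ k ∈ T, ∑ i ∈ S, (W i k)^2 ≤ 1) :
    ∑ i ∈ S, ∑ k ∈ T, (W i k)^2 ≤ min S.card T.card := by
  rw [Nat.cast_min]
  apply le_min
  · calc ∑ i ∈ S, ∑ k ∈ T, (W i k)^2 ≤ ∑ i ∈ S, 1 := Finset.sum_le_sum hrow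
      _ = S.card := by simp
  · rw [Finset.sum_comm]
    calc ∑ k ∈ T, ∑ i ∈ S, (W i k)^2 ≤ ∑ k ∈ T, 1 := Finset.sum_le_sum hcol
      _ = T.card := by simp

lemma rect_bound (m n : ℕ) (hmn : m ≤ n)
    (U : Matrix (Fin m) (Fin m) ℝ) (V : Matrix (Fin n) (Fin n) ℝ)
    (hU : U ∈ Matrix.orthogonalGroup (Fin m) ℝ)
    (hV : V ∈ Matrix.orthogonalGroup (Fin n) ℝ)
    (S T : Finset (Fin m)) :
    ∑ i ∈ S, ∑ k ∈ T, U i k * V (Fin.castLE hmn i) (Fin.castLE hmn k)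
      ≤ min S.card T.card := by
  set e : Fin m → Fin n := Fin.castLE hmn with he
  have hei : Function.Injective e := Fin.castLE_injective hmn
  have hU1 : U * Uᵀ = 1 := by
    have := hU.2
    rwa [Matrix.star_eq_conjTranspose, Matrix.conjTranspose_eq_transpose_of_trivial] at this
  have hU2 : Uᵀ * U = 1 := by
    have := hU.1
    rwa [Matrix.star_eq_conjTranspose, Matrix.conjTranspose_eq_transpose_of_trivial] at this
  have hV1 : V * Vᵀ = 1 := by
    have := hV.2
    rwa [Matrix.star_eq_conjTranspose, Matrix.conjTranspose_eq_transpose_of_trivial] at this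
  have hV2 : Vᵀ * V = 1 := by
    have := hV.1
    rwa [Matrix.star_eq_conjTranspose, Matrix.conjTranspose_eq_transpose_of_trivial] at this
  -- row and column norms
  have hUrow : ∀ i : Fin m, ∑ k : Fin m, (U i k)^2 = 1 := by
    intro i
    have := congrFun (congrFun hU1 i) i
    rw [Matrix.mul_apply] at this
    simpa [Matrix.transpose_apply, sq] using this
  have hUcol : ∀ k : Fin m, ∑ i : Fin m, (U i k)^2 = 1 := by
    intro k
    have := congrFun (congrFun hU2 k) k
    rw [Matrix.mul_apply] at this
    simpa [Matrix.transpose_apply, sq, mul_comm] using this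
  have hVrow : ∀ i : Fin n, ∑ k : Fin n, (V i k)^2 = 1 := by
    intro i
    have := congrFun (congrFun hV1 i) i
    rw [Matrix.mul_apply] at this
    simpa [Matrix.transpose_apply, sq] using this
  have hVcol : ∀ k : Fin n, ∑ i : Fin n, (V i k)^2 = 1 := by
    intro k
    have := congrFun (congrFun hV2 k) k
    rw [Matrix.mul_apply] at this
    simpa [Matrix.transpose_apply, sq, mul_comm] using this
  -- U squares bound
  have hUsq : ∑ i ∈ S, ∑ k ∈ T, (U i k)^2 ≤ min S.card T.card := by
    apply sq_rect
    · intro i _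
      calc ∑ k ∈ T, (U i k)^2 ≤ ∑ k : Fin m, (U i k)^2 :=
            Finset.sum_le_sum_of_subset_of_nonneg (Finset.subset_univ T)
              (fun k _ _ => sq_nonneg _)
        _ = 1 := hUrow i
    · intro k _
      calc ∑ i ∈ S, (U i k)^2 ≤ ∑ i : Fin m, (U i k)^2 :=
            Finset.sum_le_sum_of_subset_of_nonneg (Finset.subset_univ S)
              (fun i _ _ => sq_nonneg _)
        _ = 1 := hUcol k
  -- V squares bound
  have hVsq : ∑ i ∈ S, ∑ k ∈ T, (V (e i) (e k))^2 ≤ min S.card T.card := by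
    apply sq_rect
    · intro i _
      calc ∑ k ∈ T, (V (e i) (e k))^2 = ∑ j ∈ T.image e, (V (e i) j)^2 := by
            rw [Finset.sum_image (fun a _ b _ h => hei h)]
        _ ≤ ∑ j : Fin n, (V (e i) j)^2 :=
            Finset.sum_le_sum_of_subset_of_nonneg (Finset.subset_univ _)
              (fun j _ _ => sq_nonneg _)
        _ = 1 := hVrow (e i)
    · intro k _
      calc ∑ i ∈ S, (V (e i) (e k))^2 = ∑ j ∈ S.image e, (V j (e k))^2 := by
            rw [Finset.sum_image (fun a _ b _ h => hei h)]
        _ ≤ ∑ j : Fin n, (V j (e k))^2 :=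
            Finset.sum_le_sum_of_subset_of_nonneg (Finset.subset_univ _)
              (fun j _ _ => sq_nonneg _)
        _ = 1 := hVcol (e k)
  calc ∑ i ∈ S, ∑ k ∈ T, U i k * V (e i) (e k)
      ≤ ∑ i ∈ S, ∑ k ∈ T, ((U i k)^2 + (V (e i) (e k))^2)/2 := by
        apply Finset.sum_le_sum; intro i _
        apply Finset.sum_le_sum; intro k _
        nlinarith [sq_nonneg (U i k - V (e i) (e k))]
    _ = (∑ i ∈ S, ∑ k ∈ T, (U i k)^2 + ∑ i ∈ S, ∑ k ∈ T, (V (e i) (e k))^2)/2 := by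
        rw [← Finset.sum_add_distrib]
        simp_rw [← Finset.sum_add_distrib]
        rw [Finset.sum_div]
        exact Finset.sum_congr rfl fun i _ => by rw [Finset.sum_div]
    _ ≤ ((min S.card T.card : ℕ) : ℝ) := by
        have h1 := hUsq
        have h2 := hVsq
        linarith

lemma sum_swap4 {α β γ δ : Type*} (s : Finset α) (t : Finset β) (u : Finset γ) (v : Finset δ)
    (F : α → β → γ → δ → ℝ) :
    ∑ a ∈ s, ∑ b ∈ t, ∑ c ∈ u, ∑ d ∈ v, F a b c d
    = ∑ c ∈ u, ∑ d ∈ v, ∑ a ∈ s, ∑ b ∈ t, F a b c d := by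
  calc ∑ a ∈ s, ∑ b ∈ t, ∑ c ∈ u, ∑ d ∈ v, F a b c d
      = ∑ a ∈ s, ∑ c ∈ u, ∑ b ∈ t, ∑ d ∈ v, F a b c d :=
        Finset.sum_congr rfl fun a _ => Finset.sum_comm
    _ = ∑ c ∈ u, ∑ a ∈ s, ∑ b ∈ t, ∑ d ∈ v, F a b c d := Finset.sum_comm
    _ = ∑ c ∈ u, ∑ a ∈ s, ∑ d ∈ v, ∑ b ∈ t, F a b c d :=
        Finset.sum_congr rfl fun c _ => Finset.sum_congr rfl fun a _ => Finset.sum_comm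
    _ = ∑ c ∈ u, ∑ d ∈ v, ∑ a ∈ s, ∑ b ∈ t, F a b c d :=
        Finset.sum_congr rfl fun c _ => Finset.sum_comm

lemma sum_swap3 {α γ δ : Type*} (s : Finset α) (u : Finset γ) (v : Finset δ)
    (F : α → γ → δ → ℝ) :
    ∑ a ∈ s, ∑ c ∈ u, ∑ d ∈ v, F a c d
    = ∑ c ∈ u, ∑ d ∈ v, ∑ a ∈ s, F a c d := by
  calc ∑ a ∈ s, ∑ c ∈ u, ∑ d ∈ v, F a c d
      = ∑ c ∈ u, ∑ a ∈ s, ∑ d ∈ v, F a c d := Finset.sum_comm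
    _ = ∑ c ∈ u, ∑ d ∈ v, ∑ a ∈ s, F a c d :=
        Finset.sum_congr rfl fun c _ => Finset.sum_comm

theorem inner_le_diag_inner (m n : ℕ) (hmn : m ≤ n)
    (X : Matrix (Fin m) (Fin n) ℝ)
    (U : Matrix (Fin m) (Fin m) ℝ) (V : Matrix (Fin n) (Fin n) ℝ)
    (hU : U ∈ Matrix.orthogonalGroup (Fin m) ℝ)
    (hV : V ∈ Matrix.orthogonalGroup (Fin n) ℝ)
    (σx : Fin m → ℝ) (hσx0 : ∀ i, 0 ≤ σx i) (hσxdec : Antitone σx)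
    (hX : X = U * diagMN m n σx * Vᵀ)
    (σ : Fin m → ℝ) (hσ0 : ∀ i, 0 ≤ σ i) (hσdec : Antitone σ) :
    ∑ i : Fin m, ∑ j : Fin n, X i j * diagMN m n σ i j ≤
    ∑ i : Fin m, ∑ j : Fin n, diagMN m n σx i j * diagMN m n σ i j := by
  set e : Fin m → Fin n := Fin.castLE hmn with he
  -- simplify RHS
  have hR : ∑ i : Fin m, ∑ j : Fin n, diagMN m n σx i j * diagMN m n σ i j
      = ∑ i : Fin m, σ i * σx i := by
    refine Finset.sum_congr rfl fun i _ => ?_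
    rw [Finset.sum_eq_single (e i)]
    · simp [diagMN, e, mul_comm]
    · intro j _ hj
      have : (i : ℕ) ≠ (j : ℕ) := fun h => hj (Fin.ext h.symm)
      simp [diagMN, this]
    · intro h; exact absurd (Finset.mem_univ _) h
  -- simplify LHS
  have hL : ∑ i : Fin m, ∑ j : Fin n, X i j * diagMN m n σ i j
      = ∑ i : Fin m, σ i * X i (e i) := by
    refine Finset.sum_congr rfl fun i _ => ?_
    rw [Finset.sum_eq_single (e i)]
    · simp [diagMN, e, mul_comm]
    · intro j _ hj
      have : (i : ℕ) ≠ (j : ℕ) := fun h => hj (Fin.ext h.symm)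
      simp [diagMN, this]
    · intro h; exact absurd (Finset.mem_univ _) h
  -- entry formula
  have hXe : ∀ i : Fin m, X i (e i) = ∑ k : Fin m, σx k * (U i k * V (e i) (e k)) := by
    intro i
    have h1 : X i (e i)
        = ∑ l : Fin n, (∑ k : Fin m, U i k * (if (k : ℕ) = (l : ℕ) then σx k else 0)) * V (e i) l := by
      rw [hX]
      simp [Matrix.mul_apply, diagMN]
    rw [h1]
    simp only [Finset.sum_mul]
    rw [Finset.sum_comm]
    refine Finset.sum_congr rfl fun k _ => ?_
    rw [Finset.sum_eq_single (e k)]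
    · rw [if_pos (by simp [he])]; ring
    · intro l _ hl
      rw [if_neg, mul_zero, zero_mul]
      intro hkl
      have hek : ((e k : Fin n) : ℕ) = (k : ℕ) := by simp [he]
      exact hl (Fin.ext (by rw [hek]; exact hkl.symm))
    · intro h; exact absurd (Finset.mem_univ _) h
  rw [hL, hR]
  -- abbreviations
  set A : Fin m → Fin m → ℝ := fun i k => U i k * V (e i) (e k) with hA
  set τ : ℕ → ℝ := fun p => if h : p < m then σ ⟨p, h⟩ else 0 with hτ
  set τx : ℕ → ℝ := fun p => if h : p < m then σx ⟨p, h⟩ else 0 with hτx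
  have hd0 : ∀ p, 0 ≤ τ p - τ (p+1) := by
    intro p
    by_cases h1 : p + 1 < m
    · have h0 : p < m := by omega
      simp only [hτ, dif_pos h1, dif_pos h0]
      have := hσdec (show (⟨p, h0⟩ : Fin m) ≤ ⟨p+1, h1⟩ from by simp [Fin.le_def])
      linarith
    · by_cases h0 : p < m
      · simp only [hτ, dif_neg h1, dif_pos h0]
        have := hσ0 ⟨p, h0⟩; linarith
      · simp only [hτ, dif_neg h1, dif_neg h0]; norm_num
  have hdx0 : ∀ p, 0 ≤ τx p - τx (p+1) := by
    intro p
    by_cases h1 : p + 1 < m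
    · have h0 : p < m := by omega
      simp only [hτx, dif_pos h1, dif_pos h0]
      have := hσxdec (show (⟨p, h0⟩ : Fin m) ≤ ⟨p+1, h1⟩ from by simp [Fin.le_def])
      linarith
    · by_cases h0 : p < m
      · simp only [hτx, dif_neg h1, dif_pos h0]
        have := hσx0 ⟨p, h0⟩; linarith
      · simp only [hτx, dif_neg h1, dif_neg h0]; norm_num
  have hσsum : ∀ i : Fin m, σ i
      = ∑ p ∈ Finset.range m, (if (i : ℕ) ≤ p then τ p - τ (p+1) else 0) := by
    intro i
    rw [tele_aux τ m i i.isLt]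
    simp [hτ, i.isLt, Fin.eta, lt_irrefl]
  have hσxsum : ∀ i : Fin m, σx i
      = ∑ p ∈ Finset.range m, (if (i : ℕ) ≤ p then τx p - τx (p+1) else 0) := by
    intro i
    rw [tele_aux τx m i i.isLt]
    simp [hτx, i.isLt, Fin.eta, lt_irrefl]
  -- cardinalities
  have hcard1 : ∀ p ∈ Finset.range m,
      ((Finset.univ.filter (fun i : Fin m => (i : ℕ) ≤ p)).card) = p + 1 := by
    intro p hp
    have hp' := Finset.mem_range.mp hp
    rw [Finset.card_filter]
    rw [Fin.sum_univ_eq_sum_range (fun i => if i ≤ p then 1 else 0)]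
    have : (Finset.range m).filter (fun i => i ≤ p) = Finset.range (p+1) := by
      ext x; simp only [Finset.mem_filter, Finset.mem_range]; omega
    rw [← Finset.sum_filter, this, Finset.sum_const, Finset.card_range, smul_eq_mul, mul_one]
  have hcard2 : ∀ p ∈ Finset.range m, ∀ q ∈ Finset.range m,
      ∑ i : Fin m, (if (i : ℕ) ≤ p ∧ (i : ℕ) ≤ q then (1 : ℝ) else 0)
        = min p q + 1 := by
    intro p hp q hq
    have hp' := Finset.mem_range.mp hp
    have hq' := Finset.mem_range.mp hq
    rw [Fin.sum_univ_eq_sum_range (fun i => if i ≤ p ∧ i ≤ q then (1:ℝ) else 0)]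
    have : (Finset.range m).filter (fun i => i ≤ p ∧ i ≤ q) = Finset.range (min p q + 1) := by
      ext x
      simp only [Finset.mem_filter, Finset.mem_range]
      omega
    rw [← Finset.sum_filter, this, Finset.sum_const, Finset.card_range, nsmul_eq_mul, mul_one]
    push_cast
    ring
  -- main expansion of LHS
  have hLexp : ∑ i : Fin m, σ i * X i (e i)
      = ∑ p ∈ Finset.range m, ∑ q ∈ Finset.range m,
          (τ p - τ (p+1)) * (τx q - τx (q+1)) *
            (∑ i : Fin m, ∑ k : Fin m,
              (if (i : ℕ) ≤ p ∧ (k : ℕ) ≤ q then A i k else 0)) := by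
    have step1 : ∑ i : Fin m, σ i * X i (e i)
        = ∑ i : Fin m, ∑ k : Fin m, ∑ p ∈ Finset.range m, ∑ q ∈ Finset.range m,
            (τ p - τ (p+1)) * (τx q - τx (q+1)) *
              (if (i : ℕ) ≤ p ∧ (k : ℕ) ≤ q then A i k else 0) := by
      refine Finset.sum_congr rfl fun i _ => ?_
      rw [hXe i, Finset.mul_sum]
      refine Finset.sum_congr rfl fun k _ => ?_
      rw [hσsum i, hσxsum k]
      rw [Finset.sum_mul]
      refine Finset.sum_congr rfl fun p _ => ?_
      rw [Finset.sum_mul, Finset.mul_sum]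
      refine Finset.sum_congr rfl fun q _ => ?_
      by_cases h1 : (i : ℕ) ≤ p <;> by_cases h2 : (k : ℕ) ≤ q <;>
        simp [h1, h2, mul_assoc, hA]
    rw [step1, sum_swap4]
    refine Finset.sum_congr rfl fun p _ => Finset.sum_congr rfl fun q _ => ?_
    simp_rw [← Finset.mul_sum]
  -- main expansion of RHS
  have hRexp : ∑ i : Fin m, σ i * σx i
      = ∑ p ∈ Finset.range m, ∑ q ∈ Finset.range m,
          (τ p - τ (p+1)) * (τx q - τx (q+1)) *
            (∑ i : Fin m, (if (i : ℕ) ≤ p ∧ (i : ℕ) ≤ q then (1:ℝ) else 0)) := by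
    have step1 : ∑ i : Fin m, σ i * σx i
        = ∑ i : Fin m, ∑ p ∈ Finset.range m, ∑ q ∈ Finset.range m,
            (τ p - τ (p+1)) * (τx q - τx (q+1)) *
              (if (i : ℕ) ≤ p ∧ (i : ℕ) ≤ q then (1:ℝ) else 0) := by
      refine Finset.sum_congr rfl fun i _ => ?_
      rw [hσsum i, hσxsum i, Finset.sum_mul]
      refine Finset.sum_congr rfl fun p _ => ?_
      rw [Finset.mul_sum]
      refine Finset.sum_congr rfl fun q _ => ?_
      by_cases h1 : (i : ℕ) ≤ p <;> by_cases h2 : (i : ℕ) ≤ q <;>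
        simp [h1, h2, mul_assoc]
    rw [step1, sum_swap3]
    refine Finset.sum_congr rfl fun p _ => Finset.sum_congr rfl fun q _ => ?_
    simp_rw [← Finset.mul_sum]
  rw [hLexp, hRexp]
  -- compare term by term
  apply Finset.sum_le_sum
  intro p hp
  apply Finset.sum_le_sum
  intro q hq
  apply mul_le_mul_of_nonneg_left ?_ (mul_nonneg (hd0 p) (hdx0 q))
  -- rectangle bound
  rw [hcard2 p hp q hq]
  have hfil : ∑ i : Fin m, ∑ k : Fin m, (if (i : ℕ) ≤ p ∧ (k : ℕ) ≤ q then A i k else 0)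
      = ∑ i ∈ Finset.univ.filter (fun i : Fin m => (i : ℕ) ≤ p),
          ∑ k ∈ Finset.univ.filter (fun k : Fin m => (k : ℕ) ≤ q), A i k := by
    rw [Finset.sum_filter]
    refine Finset.sum_congr rfl fun i _ => ?_
    rw [Finset.sum_filter]
    by_cases h1 : (i : ℕ) ≤ p
    · simp [h1]
    · simp [h1]
  rw [hfil]
  have := rect_bound m n hmn U V hU hV
    (Finset.univ.filter (fun i : Fin m => (i : ℕ) ≤ p))
    (Finset.univ.filter (fun k : Fin m => (k : ℕ) ≤ q))
  rw [hcard1 p hp, hcard1 q hq] at this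
  calc ∑ i ∈ Finset.univ.filter (fun i : Fin m => (i : ℕ) ≤ p),
        ∑ k ∈ Finset.univ.filter (fun k : Fin m => (k : ℕ) ≤ q), A i k
      ≤ ((min (p+1) (q+1) : ℕ) : ℝ) := this
    _ = (min p q : ℕ) + 1 := by
        have hm : min (p+1) (q+1) = min p q + 1 := by omega
        rw [hm]; push_cast; ring
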